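/- arXiv:1510.07903 — 4 statements merged into one kernel-verified Lean document; each statement's English description precedes it below -/
import Mathlib

section
/- Let n ≥ 3 and let S = ℚ[ε]/(ε^{n−1}). Set a1 = 0, a2 = ε, and bᵢ = (i+1)·εⁱ for 1 ≤ i ≤ n−2 in S. Then the identity (1 − (2a2 − a1²)x² + a2²x⁴)·(1 + b1x² + b2x⁴ + ⋯ + b_{n−2}x^{2n−4}) = 1 + a1·x^{2n} holds in S[x]. -/
open Polynomial Finset

lemma geom_sq_aux {R : Type*} [CommRing R] (t : R) : ∀ m : ℕ,
    (1 - t) ^ 2 * ∑ i ∈ Finset.range (m + 1), ((i + 1 : ℕ) : R) * t ^ i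
      = 1 - ((m + 2 : ℕ) : R) * t ^ (m + 1) + ((m + 1 : ℕ) : R) * t ^ (m + 2) := by
  intro m
  induction m with
  | zero => simp [Finset.sum_range_one]; ring
  | succ k ih =>
    rw [Finset.sum_range_succ, mul_add, ih]
    push_cast
    ring

theorem small_qh_relation_solution_over_nilpotents (n : ℕ) (hn : 3 ≤ n) :
    let S := (Polynomial ℚ) ⧸ Ideal.span {(X : Polynomial ℚ) ^ (n - 1)}
    let ε : S := Ideal.Quotient.mk _ X
    let a1 : S := 0
    let a2 : S := ε
    let b : ℕ → S := fun i => ((i + 1 : ℕ) : S) * ε ^ i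
    (1 - C (2 * a2 - a1 ^ 2) * X ^ 2 + C (a2 ^ 2) * X ^ 4) *
        (1 + ∑ i ∈ Finset.Icc 1 (n - 2), C (b i) * X ^ (2 * i)) =
      1 + C a1 * X ^ (2 * n) := by
  intro S ε a1 a2 b
  have hε : ε ^ (n - 1) = 0 := by
    show (Ideal.Quotient.mk _ X : S) ^ (n - 1) = 0
    rw [← map_pow]
    exact Ideal.Quotient.eq_zero_iff_mem.mpr (Ideal.subset_span rfl)
  set t : Polynomial S := C ε * X ^ 2 with ht
  have ht0 : t ^ (n - 1) = 0 := by
    rw [ht, mul_pow (C ε) (X ^ 2), ← C_pow, hε, map_zero, zero_mul]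
  have hfac : (1 : Polynomial S) - C (2 * a2 - a1 ^ 2) * X ^ 2 + C (a2 ^ 2) * X ^ 4
      = (1 - t) ^ 2 := by
    simp only [ht, a1, a2, map_sub, map_mul, map_pow, map_ofNat, map_zero]
    ring
  have hsum : (1 : Polynomial S) + ∑ i ∈ Finset.Icc 1 (n - 2), C (b i) * X ^ (2 * i)
      = ∑ i ∈ Finset.range (n - 2 + 1), ((i + 1 : ℕ) : Polynomial S) * t ^ i := by
    have hins : Finset.range (n - 2 + 1) = insert 0 (Finset.Icc 1 (n - 2)) := by
      ext k
      simp only [Finset.mem_range, Finset.mem_insert, Finset.mem_Icc]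
      omega
    rw [hins, Finset.sum_insert (by simp)]
    congr 1
    · simp
    · apply Finset.sum_congr rfl
      intro i _
      simp only [b, ht, mul_pow, ← map_pow, ← pow_mul, map_mul, map_natCast]
      rw [C_pow, ← Polynomial.C_eq_natCast]
      ring
  rw [hfac, hsum, geom_sq_aux t (n - 2)]
  have h1 : n - 2 + 1 = n - 1 := by omega
  have h2 : n - 2 + 2 = (n - 1) + 1 := by omega
  rw [h1, h2, pow_succ, ht0]
  simp [a1]
end

section
/- Let K be an algebraically closed field of characteristic zero and n ≥ 2. The set {(z1, z2) ∈ K² : z1 ≠ 0, z2 ≠ 0, z1 ≠ z2, z1^{2n} = z1 + z2, z2^{2n} = z1 + z2} has exactly 2(n−1)(2n−1) elements. -/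
open Polynomial

lemma aux_card {K : Type*} [Field K] [IsAlgClosed K] [CharZero K] [DecidableEq K] {m : ℕ} (hm : m ≠ 0)
    {a : K} (ha : a ≠ 0) : (Polynomial.nthRoots m a).toFinset.card = m := by
  classical
  haveI : NeZero ((m : K)) := ⟨Nat.cast_ne_zero.mpr hm⟩
  obtain ⟨ζ, hζ⟩ := HasEnoughRootsOfUnity.exists_primitiveRoot K m
  rw [Multiset.toFinset_card_of_nodup (hζ.nthRoots_nodup ha), hζ.card_nthRoots,
    if_pos (IsAlgClosed.exists_pow_nat_eq a (Nat.pos_of_ne_zero hm))]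

lemma aux_mem {K : Type*} [Field K] [DecidableEq K] {m : ℕ} (hm : m ≠ 0) {a z : K} :
    z ∈ (Polynomial.nthRoots m a).toFinset ↔ z ^ m = a := by
  classical
  rw [Multiset.mem_toFinset, Polynomial.mem_nthRoots (Nat.pos_of_ne_zero hm)]

theorem count_offorigin_solutions (K : Type*) [Field K] [IsAlgClosed K] [CharZero K]
    (n : ℕ) (hn : 2 ≤ n) :
    Set.ncard {p : K × K | p.1 ≠ 0 ∧ p.2 ≠ 0 ∧ p.1 ≠ p.2 ∧
        p.1 ^ (2 * n) = p.1 + p.2 ∧ p.2 ^ (2 * n) = p.1 + p.2} =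
      2 * (n - 1) * (2 * n - 1) := by
  classical
  have h2n : 2 * n ≠ 0 := by omega
  have h2n1 : 2 * n - 1 ≠ 0 := by omega
  have hsucc : 2 * n = (2 * n - 1) + 1 := by omega
  set A : Finset K := ((nthRoots (2 * n) (1 : K)).toFinset.erase 1).erase (-1) with hA
  have hmemA : ∀ ζ : K, ζ ∈ A ↔ ζ ^ (2 * n) = 1 ∧ ζ ≠ 1 ∧ ζ ≠ -1 := by
    intro ζ
    simp only [hA, Finset.mem_erase, aux_mem h2n]
    tauto
  set B : K → Finset K := fun ζ => (nthRoots (2 * n - 1) (1 + ζ)).toFinset with hB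
  have hmemB : ∀ ζ z : K, z ∈ B ζ ↔ z ^ (2 * n - 1) = 1 + ζ := fun ζ z => aux_mem h2n1
  set F : Finset (K × K) := A.biUnion (fun ζ => (B ζ).image (fun z => (z, ζ * z))) with hF
  have hS : {p : K × K | p.1 ≠ 0 ∧ p.2 ≠ 0 ∧ p.1 ≠ p.2 ∧
      p.1 ^ (2 * n) = p.1 + p.2 ∧ p.2 ^ (2 * n) = p.1 + p.2} = ↑F := by
    ext p
    obtain ⟨z1, z2⟩ := p
    simp only [Set.mem_setOf_eq, hF, Finset.coe_biUnion, Set.mem_iUnion, Finset.mem_coe,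
      Finset.mem_image, hmemA, hmemB, Prod.mk.injEq]
    constructor
    · rintro ⟨h1, h2, h3, h4, h5⟩
      refine ⟨z2 / z1, ⟨?_, ?_, ?_⟩, z1, ?_, rfl, div_mul_cancel₀ z2 h1⟩
      · field_simp
        rw [div_pow, h4, h5, div_self]; rw [← h5]; exact pow_ne_zero _ h2
      · intro h
        exact h3 ((div_eq_one_iff_eq h1).mp h).symm
      · intro h
        rw [div_eq_iff h1] at h
        apply h1
        have h0 : z1 ^ (2 * n) = 0 := by rw [h4, h]; ring
        exact pow_eq_zero_iff h2n |>.mp h0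
      · have h4' := h4
        rw [hsucc, pow_succ] at h4'
        field_simp
        linear_combination h4' 
    · rintro ⟨ζ, ⟨hζpow, hζ1, hζm1⟩, z, hz, rfl, rfl⟩
      have hz0 : z ≠ 0 := by
        intro h
        rw [h, zero_pow h2n1] at hz
        exact hζm1 (by linear_combination -hz)
      have hzpow : z ^ (2 * n) = z + ζ * z := by
        rw [hsucc, pow_succ, hz]; ring
      refine ⟨hz0, ?_, ?_, hzpow, ?_⟩
      · intro h
        rcases mul_eq_zero.mp h with h | h
        · rw [h, zero_pow h2n] at hζpow; exact one_ne_zero hζpow.symm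
        · exact hz0 h
      · intro h
        apply hζ1
        have := mul_right_cancel₀ hz0 (show 1 * z = ζ * z by rw [one_mul, ← h])
        exact this.symm
      · rw [mul_pow, hζpow, one_mul, hzpow]
  rw [hS, Set.ncard_coe_finset, hF]
  rw [Finset.card_biUnion]
  · have hcards : ∀ ζ ∈ A, ((B ζ).image (fun z => (z, ζ * z))).card = 2 * n - 1 := by
      intro ζ hζ
      rw [Finset.card_image_of_injective _ (fun a b h => congrArg Prod.fst h)]
      obtain ⟨-, -, hζm1⟩ := (hmemA ζ).mp hζ
      have : (1 : K) + ζ ≠ 0 := by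
        intro h; exact hζm1 (by linear_combination h)
      exact aux_card h2n1 this
    rw [Finset.sum_congr rfl hcards, Finset.sum_const, smul_eq_mul]
    have hAcard : A.card = 2 * n - 2 := by
      have h1mem : (1 : K) ∈ (nthRoots (2 * n) (1 : K)).toFinset := by
        rw [aux_mem h2n, one_pow]
      have hm1mem : (-1 : K) ∈ (nthRoots (2 * n) (1 : K)).toFinset.erase 1 := by
        rw [Finset.mem_erase, aux_mem h2n]
        constructor
        · intro h; exact two_ne_zero (α := K) (by linear_combination -h)
        · exact Even.neg_one_pow ⟨n, by ring⟩
      rw [hA, Finset.card_erase_of_mem hm1mem, Finset.card_erase_of_mem h1mem,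
        aux_card h2n one_ne_zero]
      omega
    rw [hAcard]
    have : 2 * (n - 1) = 2 * n - 2 := by omega
    rw [this]
  · intro ζ1 h1 ζ2 h2 hne
    simp only [Finset.disjoint_left, Finset.mem_image]
    rintro ⟨a, b⟩ ⟨z, hz, hzz⟩ ⟨w, hw, hww⟩
    apply hne
    obtain ⟨-, -, hm1⟩ := (hmemA ζ1).mp h1
    rw [hmemB] at hz hw
    injection hzz with hz1 hz2
    injection hww with hw1 hw2
    have ha0 : a ≠ 0 := by
      rw [← hz1]
      intro h0
      rw [h0, zero_pow h2n1] at hz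
      exact hm1 (by linear_combination -hz)
    rw [hz1] at hz2
    rw [hw1] at hw2
    exact mul_right_cancel₀ ha0 (hz2.trans hw2.symm)
end

section
/- The ℚ-vector space dimension of ℚ[a1, a2, b1]/(b1 − 2a2 + a1², a2² − b1·(2a2 − a1²), a2²·b1 − a1) equals 12. -/
open MvPolynomial

noncomputable def smallQH_IG26 : Type :=
  MvPolynomial (Fin 3) ℚ ⧸
    Ideal.span {(X 2 : MvPolynomial (Fin 3) ℚ) - 2 * X 1 + (X 0) ^ 2,
      (X 1) ^ 2 - X 2 * (2 * X 1 - (X 0) ^ 2),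
      (X 1) ^ 2 * X 2 - X 0}

noncomputable instance : CommRing smallQH_IG26 := Ideal.Quotient.commRing _
noncomputable instance : Algebra ℚ smallQH_IG26 := Ideal.Quotient.algebra ℚ

noncomputable def fpoly : Polynomial ℚ := Polynomial.X^12 + 2*Polynomial.X^7 - 3*Polynomial.X^2

lemma fpoly_monic : fpoly.Monic := by unfold fpoly; monicity!

lemma fpoly_natDegree : fpoly.natDegree = 12 := by unfold fpoly; compute_degree!

namespace SQH

abbrev Rel : Set (MvPolynomial (Fin 3) ℚ) :=
  {(MvPolynomial.X 2 : MvPolynomial (Fin 3) ℚ) - 2 * MvPolynomial.X 1 + (MvPolynomial.X 0) ^ 2,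
    (MvPolynomial.X 1) ^ 2 - MvPolynomial.X 2 * (2 * MvPolynomial.X 1 - (MvPolynomial.X 0) ^ 2),
    (MvPolynomial.X 1) ^ 2 * MvPolynomial.X 2 - MvPolynomial.X 0}

noncomputable def A : Type := AdjoinRoot fpoly

noncomputable instance : CommRing A := inferInstanceAs (CommRing (AdjoinRoot fpoly))
noncomputable instance : Algebra ℚ A := inferInstanceAs (Algebra ℚ (AdjoinRoot fpoly))

noncomputable def r : A := AdjoinRoot.root fpoly
noncomputable def c : A := algebraMap ℚ A (1/2)

lemma hc : 2 * c = 1 := by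
  unfold c
  rw [← map_ofNat (algebraMap ℚ A) 2, ← map_mul, ← map_one (algebraMap ℚ A)]
  norm_num

lemma hr : r^12 + 2*r^7 - 3*r^2 = 0 := by
  have := AdjoinRoot.eval₂_root fpoly
  unfold fpoly at this
  simp at this; exact this

noncomputable def F : MvPolynomial (Fin 3) ℚ →ₐ[ℚ] A :=
  MvPolynomial.aeval ![r^3, c*(r+r^6), r]

lemma span_le_ker : Ideal.span Rel ≤ RingHom.ker F.toRingHom := by
  rw [Ideal.span_le]
  rintro p (rfl | rfl | rfl) <;>
    simp only [SetLike.mem_coe, RingHom.mem_ker, AlgHom.toRingHom_eq_coe,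
      RingHom.coe_coe, F, map_add, map_sub, map_mul, map_pow, map_ofNat,
      MvPolynomial.aeval_X, Matrix.cons_val_zero, Matrix.cons_val_one,
      Matrix.head_cons, Matrix.cons_val_two, Matrix.tail_cons]
  · linear_combination (-(r+r^6))*hc
  · linear_combination c^2*hr + ((2*c+1)*r^2 - r*(r+r^6))*hc
  · linear_combination c^2*r*hr + (2*c+1)*r^3*hc

end SQH

namespace SQH

noncomputable def mkq : MvPolynomial (Fin 3) ℚ →+* smallQH_IG26 :=
  Ideal.Quotient.mk (Ideal.span Rel)

noncomputable def a1 : smallQH_IG26 := mkq (MvPolynomial.X 0)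
noncomputable def a2 : smallQH_IG26 := mkq (MvPolynomial.X 1)
noncomputable def b : smallQH_IG26 := mkq (MvPolynomial.X 2)

lemma hmk (p : MvPolynomial (Fin 3) ℚ) (hp : p ∈ Rel) : mkq p = 0 :=
  Ideal.Quotient.eq_zero_iff_mem.mpr (Ideal.subset_span hp)

lemma h1 : b - 2*a2 + a1^2 = 0 := by
  have := hmk _ (Set.mem_insert _ _)
  simp only [map_sub, map_add, map_mul, map_pow, map_ofNat] at this; exact this

lemma h2 : a2^2 - b*(2*a2 - a1^2) = 0 := by
  have := hmk ((MvPolynomial.X 1) ^ 2 - MvPolynomial.X 2 * (2 * MvPolynomial.X 1 - (MvPolynomial.X 0) ^ 2)) (by simp [Rel])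
  simp only [map_sub, map_add, map_mul, map_pow, map_ofNat] at this; exact this

lemma h3 : a2^2*b - a1 = 0 := by
  have := hmk ((MvPolynomial.X 1) ^ 2 * MvPolynomial.X 2 - MvPolynomial.X 0) (by simp [Rel])
  simp only [map_sub, map_add, map_mul, map_pow, map_ofNat] at this; exact this

lemma e1 : a2^2 = b^2 := by linear_combination h2 - b*h1
lemma e2 : a1 = b^3 := by linear_combination b*e1 - h3
lemma e3 : 2*a2 = b + b^6 := by linear_combination -h1 + (a1+b^3)*e2
lemma eb : b^12 + 2*b^7 - 3*b^2 = 0 := by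
  linear_combination 4*e1 - (2*a2 + b^6 + b)*e3

lemma hb : Polynomial.aeval b fpoly = 0 := by
  unfold fpoly
  simp only [map_add, map_sub, map_mul, map_pow, Polynomial.aeval_X, map_ofNat]
  linear_combination eb

noncomputable def F' : smallQH_IG26 →ₐ[ℚ] A :=
  Ideal.Quotient.liftₐ (Ideal.span Rel) F
    (fun a ha => span_le_ker ha)

noncomputable def G : A →ₐ[ℚ] smallQH_IG26 :=
  AdjoinRoot.liftAlgHom fpoly (Algebra.ofId ℚ smallQH_IG26) b hb

end SQH

namespace SQH

lemma Groot : G (AdjoinRoot.root fpoly) = b := AdjoinRoot.liftAlgHom_root fpoly (Algebra.ofId ℚ smallQH_IG26) b hb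

lemma FG : F'.comp G = AlgHom.id ℚ A := by
  apply AdjoinRoot.algHom_ext
  show F' (G (AdjoinRoot.root fpoly)) = AdjoinRoot.root fpoly
  rw [Groot]
  show F (MvPolynomial.X 2) = AdjoinRoot.root fpoly
  simp [F, r]
  rfl

lemma hc' : 2 * (algebraMap ℚ smallQH_IG26 (1/2)) = 1 := by
  rw [← map_ofNat (algebraMap ℚ smallQH_IG26) 2, ← map_mul, ← map_one (algebraMap ℚ smallQH_IG26)]
  norm_num

lemma GF : G.comp F' = AlgHom.id ℚ smallQH_IG26 := by
  apply Ideal.Quotient.algHom_ext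
  apply MvPolynomial.algHom_ext
  intro i
  fin_cases i
  · show G (F (MvPolynomial.X 0)) = a1
    simp only [F, MvPolynomial.aeval_X, Matrix.cons_val_zero, map_pow]
    rw [show G r = b from Groot]
    linear_combination -e2
  · show G (F (MvPolynomial.X 1)) = a2
    simp only [F, MvPolynomial.aeval_X, Matrix.cons_val_one, Matrix.head_cons, Matrix.cons_val_zero,
      map_mul, map_add, map_pow]
    rw [show G r = b from Groot,
        show G c = algebraMap ℚ smallQH_IG26 (1/2) from (G.commutes _)]
    linear_combination -(algebraMap ℚ smallQH_IG26 (1/2))*e3 + a2*hc'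
  · show G (F (MvPolynomial.X 2)) = b
    simp only [F, MvPolynomial.aeval_X, Matrix.cons_val_two, Matrix.tail_cons, Matrix.head_cons]
    exact Groot

noncomputable def equivA : smallQH_IG26 ≃ₐ[ℚ] A := AlgEquiv.ofAlgHom F' G FG GF

end SQH

theorem smallQH_IG26_dim : Module.finrank ℚ smallQH_IG26 = 12 := by
  rw [SQH.equivA.toLinearEquiv.finrank_eq]
  show Module.finrank ℚ (AdjoinRoot fpoly) = 12
  rw [(AdjoinRoot.powerBasis (f := fpoly) fpoly_monic.ne_zero).finrank,
    AdjoinRoot.powerBasis_dim, fpoly_natDegree]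
end

section
/- The set of points (a1, a2, b1) ∈ ℂ³ with a1 ≠ 0 satisfying b1 = 2a2 − a1², a2² = b1·(2a2 − a1²), and a2²·b1 = a1 has exactly 10 elements. -/
open Polynomial

lemma pow5_finset (c : ℂ) : ∃ s : Finset ℂ, {a : ℂ | a ^ 5 = c} = ↑s := by
  classical
  exact ⟨(nthRoots 5 c).toFinset, by
    ext a; simp [Polynomial.mem_nthRoots (by norm_num : (0:ℕ) < 5)]⟩

lemma ncard_pow5 (c : ℂ) (hc : c ≠ 0) : Set.ncard {a : ℂ | a ^ 5 = c} = 5 := by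
  classical
  obtain ⟨ζ, hζ⟩ : ∃ ζ : ℂ, IsPrimitiveRoot ζ 5 := ⟨_, Complex.isPrimitiveRoot_exp 5 (by norm_num)⟩
  have hset : {a : ℂ | a ^ 5 = c} = ↑((nthRoots 5 c).toFinset) := by
    ext a
    simp [Polynomial.mem_nthRoots (by norm_num : (0:ℕ) < 5)]
  rw [hset, Set.ncard_coe_finset, Multiset.toFinset_card_of_nodup (hζ.nthRoots_nodup hc),
    hζ.card_nthRoots]
  rw [if_pos]
  exact IsAlgClosed.exists_pow_nat_eq c (by norm_num)

lemma pow5_finite (c : ℂ) : {a : ℂ | a ^ 5 = c}.Finite := by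
  obtain ⟨s, hs⟩ := pow5_finset c
  rw [hs]; exact s.finite_toSet

theorem IG26_reduced_points_count :
    Set.ncard {p : ℂ × ℂ × ℂ | p.1 ≠ 0 ∧ p.2.2 = 2 * p.2.1 - p.1 ^ 2 ∧
        p.2.1 ^ 2 = p.2.2 * (2 * p.2.1 - p.1 ^ 2) ∧ p.2.1 ^ 2 * p.2.2 = p.1} = 10 := by
  set f : ℂ → ℂ × ℂ × ℂ := fun a => (a, a ^ 2, a ^ 2) with hf
  set g : ℂ → ℂ × ℂ × ℂ := fun a => (a, a ^ 2 / 3, -(a ^ 2 / 3)) with hg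
  have hfi : Function.Injective f := fun a b h => congrArg Prod.fst h
  have hgi : Function.Injective g := fun a b h => congrArg Prod.fst h
  have hS : {p : ℂ × ℂ × ℂ | p.1 ≠ 0 ∧ p.2.2 = 2 * p.2.1 - p.1 ^ 2 ∧
        p.2.1 ^ 2 = p.2.2 * (2 * p.2.1 - p.1 ^ 2) ∧ p.2.1 ^ 2 * p.2.2 = p.1}
      = f '' {a | a ^ 5 = 1} ∪ g '' {a | a ^ 5 = -27} := by
    ext ⟨a, b, c⟩
    simp only [Set.mem_setOf_eq, Set.mem_union, Set.mem_image, hf, hg, Prod.mk.injEq]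
    constructor
    · rintro ⟨h0, h1, h2, h3⟩
      rw [← h1] at h2
      have hbc : (b - c) * (b + c) = 0 := by ring_nf; linear_combination h2
      rcases mul_eq_zero.mp hbc with h | h
      · -- b = c: then c = a^2, a^5 = 1
        have hb : b = c := sub_eq_zero.mp h
        have hc : c = a ^ 2 := by rw [hb] at h1; linear_combination -h1
        have ha5 : a * (a ^ 5 - 1) = 0 := by
          rw [hb, hc] at h3
          linear_combination h3
        have ha : a ^ 5 = 1 := by
          rcases mul_eq_zero.mp ha5 with h' | h'
          · exact absurd h' h0
          · linear_combination h'
        exact Or.inl ⟨a, ha, rfl, by rw [hb, hc], hc.symm ▸ rfl⟩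
      · -- b = -c
        have hb : b = -c := eq_neg_of_add_eq_zero_left h
        have hc : c = -(a ^ 2 / 3) := by rw [hb] at h1; linear_combination h1/3
        have ha5 : a * (a ^ 5 - (-27)) = 0 := by
          rw [hb, hc] at h3
          linear_combination (-27 : ℂ) * h3
        have ha : a ^ 5 = -27 := by
          rcases mul_eq_zero.mp ha5 with h' | h'
          · exact absurd h' h0
          · linear_combination h'
        exact Or.inr ⟨a, ha, rfl, by rw [hb, hc]; ring, hc.symm⟩
    · rintro (⟨a', ha, rfl, rfl, rfl⟩ | ⟨a', ha, rfl, rfl, rfl⟩)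
      · have h0 : a' ≠ 0 := by rintro rfl; norm_num at ha
        refine ⟨h0, by ring, by ring, ?_⟩
        linear_combination a' * ha
      · have h0 : a' ≠ 0 := by rintro rfl; norm_num at ha
        refine ⟨h0, by ring, by ring, ?_⟩
        linear_combination (-a'/27) * ha
  rw [hS]
  have hdisj : Disjoint (f '' {a : ℂ | a ^ 5 = 1}) (g '' {a : ℂ | a ^ 5 = -27}) := by
    rw [Set.disjoint_left]
    rintro p ⟨a, ha, rfl⟩ ⟨b, hb, hab⟩
    have hba : b = a := congrArg Prod.fst hab
    rw [hba] at hb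
    have : (1 : ℂ) = -27 := ha ▸ hb
    norm_num at this
  rw [Set.ncard_union_eq hdisj ((pow5_finite 1).image f) ((pow5_finite (-27)).image g),
    Set.ncard_image_of_injective _ hfi, Set.ncard_image_of_injective _ hgi,
    ncard_pow5 1 one_ne_zero, ncard_pow5 (-27) (by norm_num)]
end
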